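/- Let α be a positive real number, let k and n be positive integers, and let H be an n-vertex graph containing a spanning forest with at most α vertices of degree at most one (degree taken in the spanning forest). Then H contains at least n/k − α pairwise vertex-disjoint paths, each on exactly k vertices. -/

import Mathlib

open SimpleGraph

private lemma exists_walk_of_chain {V : Type} {F : SimpleGraph V} :
    ∀ (l : List V) (a c : V), List.Chain F.Adj a l →
      (a :: l).getLast (List.cons_ne_nil a l) = c →
      ∃ w : F.Walk a c, w.support = a :: l := by
  intro l
  induction l with
  | nil =>
    intro a c _ hc
    simp only [List.getLast_singleton] at hc
    subst hc
    exact ⟨SimpleGraph.Walk.nil, rfl⟩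
  | cons b t ih =>
    intro a c h hc
    replace h : F.Adj a b ∧ List.Chain F.Adj b t := List.isChain_cons_cons.mp h
    rw [List.getLast_cons (List.cons_ne_nil b t)] at hc
    obtain ⟨w, hw⟩ := ih b c h.2 hc
    exact ⟨SimpleGraph.Walk.cons h.1 w, by simp [hw]⟩

private lemma no_closed_chain {V : Type} {F : SimpleGraph V} (hF : F.IsAcyclic)
    {a : V} {l : List V} (hch : List.Chain F.Adj a l) (hnd : (a :: l).Nodup)
    (hlen : 2 ≤ l.length) (hadj : F.Adj a ((a :: l).getLast (List.cons_ne_nil a l))) :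
    False := by
  set c := (a :: l).getLast (List.cons_ne_nil a l) with hc
  obtain ⟨w, hw⟩ := exists_walk_of_chain l a c hch rfl
  have hwp : w.IsPath := by rw [SimpleGraph.Walk.isPath_def, hw]; exact hnd
  have hep : (SimpleGraph.Walk.cons hadj SimpleGraph.Walk.nil : F.Walk a c).IsPath := by
    simp [SimpleGraph.Walk.isPath_def, hadj.ne]
  have := hF.path_unique ⟨w, hwp⟩ ⟨SimpleGraph.Walk.cons hadj SimpleGraph.Walk.nil, hep⟩
  have hlw : w.length = l.length := by
    have := congrArg List.length hw
    rw [SimpleGraph.Walk.length_support] at this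
    simpa using this
  have : w.length = 1 := by
    have h2 := congrArg (fun p : F.Path a c => (p : F.Walk a c).length) this
    simpa using h2
  omega

private lemma exists_leaf {V : Type} [DecidableEq V] {F : SimpleGraph V}
    [DecidableRel F.Adj] (hF : F.IsAcyclic) (s : Finset V) (hs : s.Nonempty) :
    ∃ v ∈ s, (s.filter (F.Adj v)).card ≤ 1 := by
  classical
  set good : List V → Prop :=
    fun l => l ≠ [] ∧ l.Nodup ∧ l.Chain' F.Adj ∧ ∀ x ∈ l, x ∈ s with hgood
  set S : Set ℕ := {m | ∃ l, good l ∧ l.length = m} with hS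
  obtain ⟨v₀, hv₀⟩ := hs
  have hSne : S.Nonempty := ⟨1, [v₀], ⟨by simp, by simp, List.IsChain.singleton _, by simpa using hv₀⟩, rfl⟩
  have hSbdd : BddAbove S := by
    refine ⟨s.card, fun m hm => ?_⟩
    obtain ⟨l, ⟨-, hnd, -, hsub⟩, rfl⟩ := hm
    calc l.length = l.toFinset.card := (List.toFinset_card_of_nodup hnd).symm
      _ ≤ s.card := Finset.card_le_card (fun x hx => hsub x (List.mem_toFinset.mp hx))
  obtain ⟨l, hl, hlen⟩ := Nat.sSup_mem hSne hSbdd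
  obtain ⟨hne, hnd, hch, hsub⟩ := hl
  obtain ⟨v, t, rfl⟩ : ∃ v t, l = v :: t := by
    cases l with
    | nil => exact absurd rfl hne
    | cons a b => exact ⟨a, b, rfl⟩
  refine ⟨v, hsub v (List.mem_cons_self), ?_⟩
  by_contra hdeg
  push_neg at hdeg
  rw [Finset.one_lt_card] at hdeg
  obtain ⟨w₁, hw₁, w₂, hw₂, hww⟩ := hdeg
  rw [Finset.mem_filter] at hw₁ hw₂
  -- every neighbor of v in s is in l
  have Hnb : ∀ w ∈ s, F.Adj v w → w ∈ v :: t := by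
    intro w hws hadj
    by_contra hwl
    have hgoodw : good (w :: v :: t) := by
      refine ⟨by simp, by simp [hnd, hwl], ?_, ?_⟩
      · refine List.isChain_cons.mpr ?_
        refine ⟨?_, hch⟩
        intro y hy
        simp only [List.head?_cons, Option.mem_some_iff] at hy
        subst hy
        exact hadj.symm
      · intro x hx
        rcases List.mem_cons.mp hx with rfl | hx
        · exact hws
        · exact hsub x hx
    have : (w :: v :: t).length ∈ S := ⟨w :: v :: t, hgoodw, rfl⟩
    have := le_csSup hSbdd this
    simp only [List.length_cons, hlen] at this
    omega
  have hv1 : w₁ ∈ v :: t := Hnb w₁ hw₁.1 hw₁.2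
  have hv2 : w₂ ∈ v :: t := Hnb w₂ hw₂.1 hw₂.2
  have ht1 : w₁ ∈ t := by
    rcases List.mem_cons.mp hv1 with h | h
    · exact absurd h.symm (fun h' => hw₁.2.ne' h'.symm)
    · exact h
  have ht2 : w₂ ∈ t := by
    rcases List.mem_cons.mp hv2 with h | h
    · exact absurd h.symm (fun h' => hw₂.2.ne' h'.symm)
    · exact h
  have htne : t ≠ [] := by rintro rfl; simp at ht1
  -- pick w ∈ t, adjacent to v, different from t.head
  obtain ⟨w, hadjw, hwt, hwh⟩ :
      ∃ w, F.Adj v w ∧ w ∈ t ∧ w ≠ t.head htne := by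
    by_cases h1 : w₁ = t.head htne
    · exact ⟨w₂, hw₂.2, ht2, by rw [← h1]; exact fun h => hww h.symm⟩
    · exact ⟨w₁, hw₁.2, ht1, h1⟩
  obtain ⟨⟨i, hi⟩, rfl⟩ := List.mem_iff_get.mp hwt
  have hi0 : i ≠ 0 := by
    intro h; subst h
    exact hwh (by simp [List.head_eq_getElem, List.get])
  -- take the prefix of length i+2 of v :: t and close it with the edge
  have hchain : List.Chain F.Adj v t := hch
  have hchain' : List.Chain F.Adj v (t.take (i + 1)) := by
    have : List.Chain' F.Adj ((v :: t).take (i + 2)) :=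
      List.IsChain.infix hch ((List.take_prefix _ _).isInfix)
    rwa [List.take_succ_cons] at this
  have hnd' : (v :: t.take (i + 1)).Nodup := by
    have : (v :: t.take (i + 1)).Sublist (v :: t) :=
      List.Sublist.cons₂ v (List.take_sublist _ _)
    exact this.nodup hnd
  have hlen' : 2 ≤ (t.take (i + 1)).length := by
    rw [List.length_take]
    omega
  have hlast : (v :: t.take (i + 1)).getLast (List.cons_ne_nil _ _) = t.get ⟨i, hi⟩ := by
    have hmin : min (i + 1) t.length = i + 1 := by omega
    rw [List.getLast_eq_getElem]
    simp only [List.length_cons, List.length_take, hmin, Nat.add_sub_cancel,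
      List.getElem_cons_succ, List.getElem_take]
    rfl
  exact no_closed_chain hF hchain' hnd' hlen' (by rw [hlast]; exact hadjw)

private lemma chain_mem_adj {V : Type} {F : SimpleGraph V} {l : List V}
    (hch : l.Chain' F.Adj) (hlen : 2 ≤ l.length) {u : V} (hu : u ∈ l) :
    ∃ y ∈ l, F.Adj u y := by
  obtain ⟨⟨j, hj⟩, rfl⟩ := List.mem_iff_get.mp hu
  rcases lt_or_ge (j + 1) l.length with h | h
  · exact ⟨l.get ⟨j + 1, h⟩, List.get_mem _ _,
      List.isChain_iff_getElem.mp hch j (by omega)⟩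
  · have hj1 : 1 ≤ j := by omega
    have hthis := List.isChain_iff_getElem.mp hch (j - 1) (by omega)
    have hjj : j - 1 + 1 = j := by omega
    simp only [hjj] at hthis
    exact ⟨l.get ⟨j - 1, by omega⟩, List.get_mem _ _, hthis.symm⟩

private lemma exists_path_partition {V : Type} [DecidableEq V] {F : SimpleGraph V}
    [DecidableRel F.Adj] (hF : F.IsAcyclic) (s : Finset V) :
    ∃ P : List (List V),
      (∀ l ∈ P, l ≠ [] ∧ l.Nodup ∧ l.Chain' F.Adj ∧ ∀ x ∈ l, x ∈ s) ∧
      List.Pairwise List.Disjoint P ∧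
      (∀ x ∈ s, ∃ l ∈ P, x ∈ l) ∧
      P.length ≤ (s.filter fun v => (s.filter (F.Adj v)).card ≤ 1).card ∧
      (∀ v ∈ s, (s.filter (F.Adj v)).card ≤ 1 →
        ∃ l ∈ P, l.head? = some v ∨ l.getLast? = some v) := by
  induction s using Finset.strongInduction with
  | _ s ih =>
  rcases s.eq_empty_or_nonempty with rfl | hs
  · exact ⟨[], by simp, by simp, by simp, by simp, by simp⟩
  obtain ⟨v, hvs, hvdeg⟩ := exists_leaf hF s hs
  set s' := s.erase v with hs'def
  have hss' : s' ⊂ s := Finset.erase_ssubset hvs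
  obtain ⟨P', hPgood, hPdis, hPcov, hPlen, hPend⟩ := ih s' hss'
  have hsub' : s' ⊆ s := Finset.erase_subset v s
  have hdegmono : ∀ w, (s'.filter (F.Adj w)).card ≤ (s.filter (F.Adj w)).card :=
    fun w => Finset.card_le_card (Finset.filter_subset_filter _ hsub')
  have hfe : ∀ w, ¬ F.Adj w v → s'.filter (F.Adj w) = s.filter (F.Adj w) := by
    intro w hw
    rw [hs'def, Finset.filter_erase, Finset.erase_eq_of_notMem]
    simp [hw]
  have hvL : v ∈ s.filter (fun w => (s.filter (F.Adj w)).card ≤ 1) :=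
    Finset.mem_filter.mpr ⟨hvs, hvdeg⟩
  have hL1 : 1 ≤ (s.filter fun w => (s.filter (F.Adj w)).card ≤ 1).card :=
    Finset.card_pos.mpr ⟨v, hvL⟩
  have hvns' : v ∉ s' := Finset.notMem_erase v s
  -- Construction A: add [v] as a singleton path
  have constrA : (s'.filter fun w => (s'.filter (F.Adj w)).card ≤ 1) ⊆
      ((s.filter fun w => (s.filter (F.Adj w)).card ≤ 1).erase v) →
      ∃ P : List (List V),
      (∀ l ∈ P, l ≠ [] ∧ l.Nodup ∧ l.Chain' F.Adj ∧ ∀ x ∈ l, x ∈ s) ∧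
      List.Pairwise List.Disjoint P ∧
      (∀ x ∈ s, ∃ l ∈ P, x ∈ l) ∧
      P.length ≤ (s.filter fun v => (s.filter (F.Adj v)).card ≤ 1).card ∧
      (∀ v ∈ s, (s.filter (F.Adj v)).card ≤ 1 →
        ∃ l ∈ P, l.head? = some v ∨ l.getLast? = some v) := by
    intro hA
    refine ⟨[v] :: P', ?_, ?_, ?_, ?_, ?_⟩
    · intro l hl
      rcases List.mem_cons.mp hl with rfl | hl
      · exact ⟨by simp, by simp, List.IsChain.singleton _, by simpa using hvs⟩
      · obtain ⟨h1, h2, h3, h4⟩ := hPgood l hl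
        exact ⟨h1, h2, h3, fun x hx => hsub' (h4 x hx)⟩
    · rw [List.pairwise_cons]
      refine ⟨fun l₂ hl₂ => ?_, hPdis⟩
      intro x hx
      simp only [List.mem_singleton] at hx
      rw [hx]
      exact fun hvl₂ => hvns' ((hPgood l₂ hl₂).2.2.2 v hvl₂)
    · intro x hx
      by_cases hxv : x = v
      · exact ⟨[v], List.mem_cons_self, by simp [hxv]⟩
      · obtain ⟨l, hl, hxl⟩ := hPcov x (Finset.mem_erase.mpr ⟨hxv, hx⟩)
        exact ⟨l, List.mem_cons_of_mem _ hl, hxl⟩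
    · have h1 : P'.length ≤ ((s.filter fun w =>
          (s.filter (F.Adj w)).card ≤ 1).erase v).card :=
        le_trans hPlen (Finset.card_le_card hA)
      rw [Finset.card_erase_of_mem hvL] at h1
      simp only [List.length_cons]
      omega
    · intro w hws hwdeg
      by_cases hwv : w = v
      · exact ⟨[v], List.mem_cons_self, Or.inl (by simp [hwv])⟩
      · have hws' : w ∈ s' := Finset.mem_erase.mpr ⟨hwv, hws⟩
        have : (s'.filter (F.Adj w)).card ≤ 1 := le_trans (hdegmono w) hwdeg
        obtain ⟨l, hl, hend⟩ := hPend w hws' this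
        exact ⟨l, List.mem_cons_of_mem _ hl, hend⟩
  rcases Nat.le_one_iff_eq_zero_or_eq_one.mp hvdeg with hdeg0 | hdeg1
  · -- v is isolated in s
    rw [Finset.card_eq_zero] at hdeg0
    have hnoadj : ∀ w, w ∈ s → ¬ F.Adj v w := by
      intro w hw hadj
      have : w ∈ s.filter (F.Adj v) := Finset.mem_filter.mpr ⟨hw, hadj⟩
      simp [hdeg0] at this
    apply constrA
    intro w hw
    rw [Finset.mem_filter] at hw
    have hwadj : ¬ F.Adj w v := fun h => hnoadj w (hsub' hw.1) h.symm
    refine Finset.mem_erase.mpr ⟨fun h => hvns' (h ▸ hw.1), Finset.mem_filter.mpr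
      ⟨hsub' hw.1, ?_⟩⟩
    rw [← hfe w hwadj]
    exact hw.2
  · -- v has exactly one neighbor u in s
    obtain ⟨u, hu⟩ := Finset.card_eq_one.mp hdeg1
    have huf : u ∈ s.filter (F.Adj v) := by rw [hu]; exact Finset.mem_singleton_self u
    rw [Finset.mem_filter] at huf
    obtain ⟨hus, hadj⟩ := huf
    have huniq : ∀ w ∈ s, F.Adj v w → w = u := by
      intro w hw h
      have : w ∈ s.filter (F.Adj v) := Finset.mem_filter.mpr ⟨hw, h⟩
      rw [hu] at this
      exact Finset.mem_singleton.mp this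
    have hune : u ≠ v := hadj.ne'
    have hus' : u ∈ s' := Finset.mem_erase.mpr ⟨hune, hus⟩
    by_cases hu' : (s'.filter (F.Adj u)).card ≤ 1
    · -- extend the path ending at u with v
      obtain ⟨l, hlP, hlend⟩ := hPend u hus' hu'
      obtain ⟨lne, lnd, lch, lsub⟩ := hPgood l hlP
      have hvnl : v ∉ l := fun h => hvns' (lsub v h)
      obtain ⟨P'', hperm⟩ : ∃ P'', P'.Perm (l :: P'') :=
        ⟨P'.erase l, List.perm_cons_erase hlP⟩
      have hmemP'' : ∀ l₂ ∈ P'', l₂ ∈ P' := by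
        intro l₂ hl₂
        rw [hperm.mem_iff]
        exact List.mem_cons_of_mem _ hl₂
      have hPdis2 : List.Pairwise List.Disjoint (l :: P'') :=
        (hperm.pairwise_iff (fun h => h.symm)).mp hPdis
      rw [List.pairwise_cons] at hPdis2
      obtain ⟨hdisl, hPdisE⟩ := hPdis2
      -- the L-cardinality bound
      have hBsub : (s'.filter fun w => (s'.filter (F.Adj w)).card ≤ 1) ⊆
          insert u ((s.filter fun w => (s.filter (F.Adj w)).card ≤ 1).erase v) := by
        intro w hw
        rw [Finset.mem_filter] at hw
        by_cases hwu : w = u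
        · rw [hwu]; exact Finset.mem_insert_self _ _
        · have hwadj : ¬ F.Adj w v := by
            intro h
            exact hwu (huniq w (hsub' hw.1) h.symm)
          refine Finset.mem_insert_of_mem (Finset.mem_erase.mpr
            ⟨fun h => hvns' (h ▸ hw.1), Finset.mem_filter.mpr ⟨hsub' hw.1, ?_⟩⟩)
          rw [← hfe w hwadj]
          exact hw.2
      have hlenB : P'.length ≤ (s.filter fun w => (s.filter (F.Adj w)).card ≤ 1).card := by
        have h1 := le_trans hPlen (Finset.card_le_card hBsub)
        have h2 := Finset.card_insert_le u ((s.filter fun w =>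
          (s.filter (F.Adj w)).card ≤ 1).erase v)
        rw [Finset.card_erase_of_mem hvL] at h2
        omega
      -- the new path
      set newl := if l.head? = some u then v :: l else l ++ [v] with hnewl
      have hmemnewl : ∀ x, x ∈ newl → x = v ∨ x ∈ l := by
        intro x hx
        rw [hnewl] at hx
        split at hx
        · rcases List.mem_cons.mp hx with h | h
          · exact Or.inl h
          · exact Or.inr h
        · rcases List.mem_append.mp hx with h | h
          · exact Or.inr h
          · exact Or.inl (List.mem_singleton.mp h)
      have hlsubnewl : ∀ x ∈ l, x ∈ newl := by
        intro x hx
        rw [hnewl]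
        split
        · exact List.mem_cons_of_mem _ hx
        · exact List.mem_append_left _ hx
      have hvmem : v ∈ newl := by
        rw [hnewl]; split
        · exact List.mem_cons_self
        · exact List.mem_append_right _ (List.mem_singleton_self v)
      have hgoodnewl : newl ≠ [] ∧ newl.Nodup ∧ newl.Chain' F.Adj ∧
          ∀ x ∈ newl, x ∈ s := by
        rw [hnewl]
        split
        next hhd =>
          refine ⟨by simp, by simp [lnd, hvnl], ?_, ?_⟩
          · refine List.isChain_cons.mpr ?_
            refine ⟨?_, lch⟩
            intro y hy
            rw [hhd] at hy
            rw [Option.mem_some_iff] at hy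
            rw [← hy]
            exact hadj
          · intro x hx
            rcases List.mem_cons.mp hx with rfl | hx
            · exact hvs
            · exact hsub' (lsub x hx)
        next hhd =>
          have hlast : l.getLast? = some u := by
            rcases hlend with h | h
            · exact absurd h hhd
            · exact h
          refine ⟨by simp, ?_, ?_, ?_⟩
          · rw [List.nodup_append]
            exact ⟨lnd, by simp, fun x hx y hy hxy => hvnl (by rw [List.mem_singleton] at hy; rw [← hy, ← hxy]; exact hx)⟩
          · refine List.isChain_append.mpr ?_
            refine ⟨lch, by simp, ?_⟩
            intro x hx y hy
            rw [hlast, Option.mem_some_iff] at hx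
            simp only [List.head?_cons, Option.mem_some_iff] at hy
            rw [← hx, ← hy]
            exact hadj.symm
          · intro x hx
            rcases List.mem_append.mp hx with h | h
            · exact hsub' (lsub x h)
            · rw [List.mem_singleton] at h; rw [h]; exact hvs
      refine ⟨newl :: P'', ?_, ?_, ?_, ?_, ?_⟩
      · intro l₂ hl₂
        rcases List.mem_cons.mp hl₂ with rfl | hl₂
        · exact hgoodnewl
        · obtain ⟨h1, h2, h3, h4⟩ := hPgood l₂ (hmemP'' l₂ hl₂)
          exact ⟨h1, h2, h3, fun x hx => hsub' (h4 x hx)⟩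
      · rw [List.pairwise_cons]
        refine ⟨?_, hPdisE⟩
        intro l₂ hl₂ x hx hxl₂
        rcases hmemnewl x hx with rfl | hxl
        · exact hvns' ((hPgood l₂ (hmemP'' l₂ hl₂)).2.2.2 x hxl₂)
        · exact hdisl l₂ hl₂ hxl hxl₂
      · intro x hx
        by_cases hxv : x = v
        · exact ⟨newl, List.mem_cons_self, hxv ▸ hvmem⟩
        · obtain ⟨l₂, hl₂, hxl₂⟩ := hPcov x (Finset.mem_erase.mpr ⟨hxv, hx⟩)
          rw [hperm.mem_iff] at hl₂
          rcases List.mem_cons.mp hl₂ with rfl | hl₂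
          · exact ⟨newl, List.mem_cons_self, hlsubnewl x hxl₂⟩
          · exact ⟨l₂, List.mem_cons_of_mem _ hl₂, hxl₂⟩
      · have := hperm.length_eq
        simp only [List.length_cons] at this ⊢
        omega
      · intro w hws hwdeg
        by_cases hwv : w = v
        · refine ⟨newl, List.mem_cons_self, ?_⟩
          rw [hnewl]
          split
          · exact Or.inl (by simp [hwv])
          · rw [hwv]
            exact Or.inr (List.getLast?_concat)
        · have hws' : w ∈ s' := Finset.mem_erase.mpr ⟨hwv, hws⟩
          have hwdeg' : (s'.filter (F.Adj w)).card ≤ 1 := le_trans (hdegmono w) hwdeg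
          obtain ⟨l₂, hl₂, hend₂⟩ := hPend w hws' hwdeg'
          rw [hperm.mem_iff] at hl₂
          rcases List.mem_cons.mp hl₂ with rfl | hl₂
          · -- w is an endpoint of l; show w is still an endpoint of newl
            by_cases hwu : w = u
            · -- w = u : we show l = [u]
              have hv_mem : v ∈ s.filter (F.Adj u) :=
                Finset.mem_filter.mpr ⟨hvs, hadj.symm⟩
              have hcard1 : (s.filter (F.Adj u)).card ≤ 1 := hwu ▸ hwdeg
              have hdegu0 : s'.filter (F.Adj u) = ∅ := by
                have hdegu1 : s.filter (F.Adj u) = {v} := by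
                  apply Finset.eq_singleton_iff_unique_mem.mpr
                  exact ⟨hv_mem, fun x hx => Finset.card_le_one.mp hcard1 x hx v hv_mem⟩
                rw [hs'def, Finset.filter_erase, hdegu1]
                simp
              have humem : u ∈ l₂ := by
                rcases hend₂ with h | h
                · rw [← hwu]
                  exact List.mem_of_mem_head? (by rw [h]; rfl)
                · rw [← hwu]
                  exact List.mem_of_mem_getLast? (by rw [h]; rfl)
              have hlu : l₂ = [u] := by
                rcases l₂ with _ | ⟨b, t⟩
                · exact absurd rfl lne
                rcases t with _ | ⟨c, t2⟩
                · have : u ∈ [b] := humem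
                  simp only [List.mem_singleton] at this
                  rw [this]
                · exfalso
                  obtain ⟨y, hy, hadjy⟩ := chain_mem_adj lch (by simp) humem
                  have : y ∈ s'.filter (F.Adj u) :=
                    Finset.mem_filter.mpr ⟨lsub y hy, hadjy⟩
                  rw [hdegu0] at this
                  simp at this
              refine ⟨newl, List.mem_cons_self, ?_⟩
              rw [hnewl, hlu]
              simp [hwu]
            · -- w ≠ u
              refine ⟨newl, List.mem_cons_self, ?_⟩
              rw [hnewl]
              split
              next hhd =>
                rcases hend₂ with h | h
                · rw [hhd] at h
                  exact absurd (Option.some_injective _ h) (fun h' => hwu h'.symm)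
                · refine Or.inr ?_
                  rw [show v :: l₂ = [v] ++ l₂ from rfl,
                    List.getLast?_append_of_ne_nil [v] lne]
                  exact h
              next hhd =>
                have hlast : l₂.getLast? = some u := by
                  rcases hlend with h | h
                  · exact absurd h hhd
                  · exact h
                rcases hend₂ with h | h
                · refine Or.inl ?_
                  rw [List.head?_append_of_ne_nil l₂ lne]
                  exact h
                · rw [hlast] at h
                  exact absurd (Option.some_injective _ h) (fun h' => hwu h'.symm)
          · exact ⟨l₂, List.mem_cons_of_mem _ hl₂, hend₂⟩
    · -- u has degree ≥ 2 in s' : use construction A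
      apply constrA
      intro w hw
      rw [Finset.mem_filter] at hw
      have hwu : w ≠ u := by
        intro h
        rw [h] at hw
        exact hu' hw.2
      have hwadj : ¬ F.Adj w v := fun h => hwu (huniq w (hsub' hw.1) h.symm)
      refine Finset.mem_erase.mpr ⟨fun h => hvns' (h ▸ hw.1), Finset.mem_filter.mpr
        ⟨hsub' hw.1, ?_⟩⟩
      rw [← hfe w hwadj]
      exact hw.2

private lemma sum_div_bound (k : ℕ) (hk : 0 < k) : ∀ L : List ℕ,
    L.sum ≤ k * (L.map (· / k)).sum + L.length * (k - 1) := by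
  intro L
  induction L with
  | nil => simp
  | cons b t iht =>
    simp only [List.sum_cons, List.map_cons, List.length_cons]
    have h1 := Nat.div_add_mod b k
    have h2 : b % k < k := Nat.mod_lt b hk
    have e1 : k * (b / k + (t.map (· / k)).sum) =
        k * (b / k) + k * (t.map (· / k)).sum := Nat.mul_add k _ _
    have e2 : (t.length + 1) * (k - 1) = t.length * (k - 1) + (k - 1) :=
      Nat.succ_mul _ _
    omega

private lemma chunk_idx_lt {k len j i : ℕ} (hj : j < len / k) (hi : i < k) :
    j * k + i < len := by
  have h1 : (j + 1) * k ≤ (len / k) * k := Nat.mul_le_mul_right k hj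
  have h2 : len / k * k ≤ len := Nat.div_mul_le_self len k
  have h3 : (j + 1) * k = j * k + k := Nat.succ_mul j k
  omega

/-- Many disjoint `k`-vertex paths from a spanning forest with few
leaves and isolated vertices.  Let `a > 0` be a real number, let `k, n` be positive
integers, and let `H` be an `n`-vertex graph containing a spanning forest `F` with at
most `a` vertices of degree at most one (degree taken in `F`).  Then `H` contains at
least `n/k − a` pairwise vertex-disjoint paths, each on exactly `k` vertices. -/
theorem many_disjoint_paths {V : Type} [Fintype V]
    (a : ℝ) (ha : 0 < a) (k n : ℕ) (hk : 0 < k) (hn : 0 < n)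
    (hcard : Fintype.card V = n)
    (H F : SimpleGraph V) (hFH : F ≤ H) (hF : F.IsAcyclic)
    (hfew : ({v : V | (F.neighborSet v).ncard ≤ 1}.ncard : ℝ) ≤ a) :
    ∃ (m : ℕ) (P : Fin m → Fin k → V),
      (n : ℝ) / (k : ℝ) - a ≤ (m : ℝ) ∧
      (∀ i, Function.Injective (P i)) ∧
      (∀ (i : Fin m) (j : ℕ) (hj : j + 1 < k),
        H.Adj (P i ⟨j, Nat.lt_of_succ_lt hj⟩) (P i ⟨j + 1, hj⟩)) ∧
      (∀ i₁ i₂, i₁ ≠ i₂ → ∀ j₁ j₂, P i₁ j₁ ≠ P i₂ j₂) := by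
  classical
  have hVne : Nonempty V := by
    rw [← Fintype.card_pos_iff, hcard]; exact hn
  obtain ⟨x₀⟩ := hVne
  obtain ⟨P, hPgood, hPdis, hPcov, hPlen, -⟩ :=
    exists_path_partition (F := F) hF Finset.univ
  -- translate the hypothesis on few leaves
  have hdeg_eq : ∀ v : V, (F.neighborSet v).ncard =
      (Finset.univ.filter (F.Adj v)).card := by
    intro v
    rw [← Set.ncard_coe_finset]
    congr 1
    ext w
    simp [SimpleGraph.mem_neighborSet]
  have hfew' : ((Finset.univ.filter fun v : V =>
      (Finset.univ.filter (F.Adj v)).card ≤ 1).card : ℝ) ≤ a := by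
    have hset : {v : V | (F.neighborSet v).ncard ≤ 1} =
        ↑(Finset.univ.filter fun v : V => (Finset.univ.filter (F.Adj v)).card ≤ 1) := by
      ext w
      rw [Set.mem_setOf_eq, hdeg_eq w]; simp
    rw [hset, Set.ncard_coe_finset] at hfew
    exact hfew
  have hPa : (P.length : ℝ) ≤ a := by
    refine le_trans ?_ hfew'
    exact_mod_cast hPlen
  -- total length of the partition is n
  have hflat_nodup : P.flatten.Nodup :=
    List.nodup_flatten.mpr ⟨fun l hl => (hPgood l hl).2.1, hPdis⟩
  have hflat_mem : ∀ x : V, x ∈ P.flatten := by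
    intro x
    obtain ⟨l, hl, hxl⟩ := hPcov x (Finset.mem_univ x)
    exact List.mem_flatten.mpr ⟨l, hl, hxl⟩
  have hlen1 : P.flatten.length = n := by
    refine le_antisymm (hcard ▸ hflat_nodup.length_le_card) ?_
    have hsub : Finset.univ ⊆ P.flatten.toFinset :=
      fun x _ => List.mem_toFinset.mpr (hflat_mem x)
    have h2 := Finset.card_le_card hsub
    rw [List.toFinset_card_of_nodup hflat_nodup, Finset.card_univ, hcard] at h2
    exact h2
  have hsum_n : (P.map List.length).sum = n := by
    rw [← List.length_flatten]; exact hlen1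
  -- the chunks
  set allChunks : List (Fin k → V) :=
    P.flatMap (fun l => (List.range (l.length / k)).map
      (fun j => fun i : Fin k => l.getD (j * k + i) x₀)) with hAC
  have hACmem : ∀ f ∈ allChunks, ∃ l ∈ P, ∃ j, j < l.length / k ∧
      f = fun i : Fin k => l.getD (j * k + i) x₀ := by
    intro f hf
    rw [hAC, List.mem_flatMap] at hf
    obtain ⟨l, hl, hf⟩ := hf
    rw [List.mem_map] at hf
    obtain ⟨j, hj, rfl⟩ := hf
    exact ⟨l, hl, j, List.mem_range.mp hj, rfl⟩
  have hAClen : allChunks.length = ((P.map List.length).map (· / k)).sum := by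
    rw [hAC, List.length_flatMap, List.map_map]
    congr 1
    apply List.map_congr_left
    intro l hl
    simp [Function.comp]
  have hm_ineq : n ≤ k * allChunks.length + P.length * k := by
    have h1 := sum_div_bound k hk (P.map List.length)
    rw [hsum_n] at h1
    rw [hAClen]
    have hlenmap : (P.map List.length).length = P.length := List.length_map _
    have h2 : P.length * (k - 1) ≤ P.length * k := Nat.mul_le_mul_left _ (Nat.sub_le k 1)
    rw [hlenmap] at h1
    omega
  -- properties of each chunk
  have hprop : ∀ f ∈ allChunks, Function.Injective f ∧
      (∀ (j : ℕ) (hj : j + 1 < k),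
        H.Adj (f ⟨j, Nat.lt_of_succ_lt hj⟩) (f ⟨j + 1, hj⟩)) := by
    intro f hf
    obtain ⟨l, hl, j, hj, rfl⟩ := hACmem f hf
    obtain ⟨-, lnd, lch, -⟩ := hPgood l hl
    constructor
    · intro i₁ i₂ hval
      have hb1 : j * k + (i₁ : ℕ) < l.length := chunk_idx_lt hj i₁.isLt
      have hb2 : j * k + (i₂ : ℕ) < l.length := chunk_idx_lt hj i₂.isLt
      simp only at hval
      rw [List.getD_eq_get l x₀ ⟨_, hb1⟩, List.getD_eq_get l x₀ ⟨_, hb2⟩] at hval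
      have heq := List.nodup_iff_injective_get.mp lnd hval
      have hnat : j * k + (i₁ : ℕ) = j * k + (i₂ : ℕ) := congrArg Fin.val heq
      exact Fin.ext (by omega)
    · intro j' hj'
      have hb2 : j * k + (j' + 1) < l.length := chunk_idx_lt hj hj'
      have hb1 : j * k + j' < l.length := by omega
      show H.Adj (l.getD (j * k + j') x₀) (l.getD (j * k + (j' + 1)) x₀)
      rw [List.getD_eq_get l x₀ ⟨_, hb1⟩, List.getD_eq_get l x₀ ⟨_, hb2⟩]
      exact hFH (List.isChain_iff_getElem.mp lch (j * k + j') (by omega))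
  -- pairwise disjointness of the chunks
  have hpw : allChunks.Pairwise (fun f g => ∀ b₁ b₂ : Fin k, f b₁ ≠ g b₂) := by
    rw [hAC, List.pairwise_flatMap]
    constructor
    · intro l hl
      obtain ⟨-, lnd, -, -⟩ := hPgood l hl
      rw [List.pairwise_iff_getElem]
      intro p q hp hq hpq
      simp only [List.length_map, List.length_range] at hp hq
      intro b₁ b₂
      simp only [List.getElem_map, List.getElem_range]
      have hb1 : p * k + (b₁ : ℕ) < l.length := chunk_idx_lt hp b₁.isLt
      have hb2 : q * k + (b₂ : ℕ) < l.length := chunk_idx_lt hq b₂.isLt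
      rw [List.getD_eq_get l x₀ ⟨_, hb1⟩, List.getD_eq_get l x₀ ⟨_, hb2⟩]
      intro hval
      have heq := List.nodup_iff_injective_get.mp lnd hval
      have hnat : p * k + (b₁ : ℕ) = q * k + (b₂ : ℕ) := congrArg Fin.val heq
      have h3 : (p + 1) * k ≤ q * k := Nat.mul_le_mul_right k hpq
      have h4 : (p + 1) * k = p * k + k := Nat.succ_mul p k
      have h5 := b₁.isLt
      omega
    · refine List.Pairwise.imp ?_ hPdis
      intro l₁ l₂ hdis f hf g hg b₁ b₂ hval
      rw [List.mem_map] at hf hg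
      obtain ⟨p, hp, rfl⟩ := hf
      obtain ⟨q, hq, rfl⟩ := hg
      rw [List.mem_range] at hp hq
      have hb1 : p * k + (b₁ : ℕ) < l₁.length := chunk_idx_lt hp b₁.isLt
      have hb2 : q * k + (b₂ : ℕ) < l₂.length := chunk_idx_lt hq b₂.isLt
      simp only at hval
      rw [List.getD_eq_getElem l₁ x₀ hb1, List.getD_eq_getElem l₂ x₀ hb2] at hval
      have h5 : l₁[p * k + (b₁ : ℕ)] ∈ l₂ := by
        rw [hval]; exact List.getElem_mem hb2
      exact hdis (List.getElem_mem hb1) h5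
  refine ⟨allChunks.length, fun i => allChunks.get i, ?_, ?_, ?_, ?_⟩
  · have hk0 : (0 : ℝ) < k := by exact_mod_cast hk
    rw [sub_le_iff_le_add, div_le_iff₀ hk0]
    have hr : (n : ℝ) ≤ k * allChunks.length + P.length * k := by
      exact_mod_cast hm_ineq
    have h4 : (P.length : ℝ) * k ≤ a * k := mul_le_mul_of_nonneg_right hPa hk0.le
    nlinarith [hr, h4]
  · intro i
    exact (hprop _ (List.get_mem _ i)).1
  · intro i j hj
    exact (hprop _ (List.get_mem _ i)).2 j hj
  · intro i₁ i₂ hne j₁ j₂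
    rcases lt_or_gt_of_ne hne with h | h
    · exact (List.pairwise_iff_get.mp hpw i₁ i₂ h) j₁ j₂
    · exact fun hval => (List.pairwise_iff_get.mp hpw i₂ i₁ h) j₂ j₁ hval.symm
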